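/- Let α, U, A : ℂ → ℝ be continuously real-differentiable real-valued functions, and suppose ψ = (ψ₁, ψ₂) : ℂ → ℂ² satisfies the Gauss–Weingarten system ∂ψ₁ = ∂α·ψ₁ + A·e^{−α}·ψ₂, ∂ψ₂ = −U·ψ₁, ∂̄ψ₁ = U·ψ₂, ∂̄ψ₂ = −A·e^{−α}·ψ₁ + ∂̄α·ψ₂ on ℂ. Then ψ* = (ψ*₁, ψ*₂) with ψ*₁ = i·e^{−α}·ψ₂ and ψ*₂ = i·e^{−α}·ψ₁ satisfies the Dirac equation with potential U* = −A·e^{−α}: ∂ψ*₂ + U*·ψ*₁ = 0 and −∂̄ψ*₁ + U*·ψ*₂ = 0. -/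

import Mathlib

open Complex

/-- Wirtinger derivative ∂f = ½(∂f/∂x − i ∂f/∂y). -/
noncomputable def wd (f : ℂ → ℂ) (z : ℂ) : ℂ :=
  (1 / 2 : ℂ) * (fderiv ℝ f z 1 - Complex.I * fderiv ℝ f z Complex.I)

/-- Wirtinger derivative ∂̄f = ½(∂f/∂x + i ∂f/∂y). -/
noncomputable def wdb (f : ℂ → ℂ) (z : ℂ) : ℂ :=
  (1 / 2 : ℂ) * (fderiv ℝ f z 1 + Complex.I * fderiv ℝ f z Complex.I)


lemma fd_mul (f g : ℂ → ℂ) (z v : ℂ) (hf : DifferentiableAt ℝ f z)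
    (hg : DifferentiableAt ℝ g z) :
    fderiv ℝ (fun w => f w * g w) z v = fderiv ℝ f z v * g z + f z * fderiv ℝ g z v := by
  rw [fderiv_fun_mul hf hg]
  simp [smul_eq_mul]
  ring

lemma fd_exp (g : ℂ → ℂ) (z v : ℂ) (hg : DifferentiableAt ℝ g z) :
    fderiv ℝ (fun w => Complex.exp (g w)) z v = Complex.exp (g z) * fderiv ℝ g z v := by
  have h := ((Complex.hasDerivAt_exp (g z)).hasFDerivAt.restrictScalars ℝ).comp z hg.hasFDerivAt
  have h2 : HasFDerivAt (fun w => Complex.exp (g w)) _ z := h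
  rw [h2.fderiv]
  simp [smul_eq_mul]
  ring

lemma wd_mul (f g : ℂ → ℂ) (z : ℂ) (hf : DifferentiableAt ℝ f z)
    (hg : DifferentiableAt ℝ g z) :
    wd (fun w => f w * g w) z = wd f z * g z + f z * wd g z := by
  unfold wd
  rw [fd_mul f g z 1 hf hg, fd_mul f g z Complex.I hf hg]
  ring

lemma wdb_mul (f g : ℂ → ℂ) (z : ℂ) (hf : DifferentiableAt ℝ f z)
    (hg : DifferentiableAt ℝ g z) :
    wdb (fun w => f w * g w) z = wdb f z * g z + f z * wdb g z := by
  unfold wdb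
  rw [fd_mul f g z 1 hf hg, fd_mul f g z Complex.I hf hg]
  ring

lemma wd_exp (g : ℂ → ℂ) (z : ℂ) (hg : DifferentiableAt ℝ g z) :
    wd (fun w => Complex.exp (g w)) z = Complex.exp (g z) * wd g z := by
  unfold wd
  rw [fd_exp g z 1 hg, fd_exp g z Complex.I hg]
  ring

lemma wdb_exp (g : ℂ → ℂ) (z : ℂ) (hg : DifferentiableAt ℝ g z) :
    wdb (fun w => Complex.exp (g w)) z = Complex.exp (g z) * wdb g z := by
  unfold wdb
  rw [fd_exp g z 1 hg, fd_exp g z Complex.I hg]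
  ring

lemma wd_neg (f : ℂ → ℂ) (z : ℂ) : wd (fun w => -(f w)) z = -wd f z := by
  unfold wd
  rw [fderiv_fun_neg]
  simp
  ring

lemma wdb_neg (f : ℂ → ℂ) (z : ℂ) : wdb (fun w => -(f w)) z = -wdb f z := by
  unfold wdb
  rw [fderiv_fun_neg]
  simp
  ring

lemma wd_const_mul (c : ℂ) (f : ℂ → ℂ) (z : ℂ) (hf : DifferentiableAt ℝ f z) :
    wd (fun w => c * f w) z = c * wd f z := by
  rw [wd_mul (fun _ => c) f z (differentiableAt_const c) hf]
  simp [wd]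

lemma wdb_const_mul (c : ℂ) (f : ℂ → ℂ) (z : ℂ) (hf : DifferentiableAt ℝ f z) :
    wdb (fun w => c * f w) z = c * wdb f z := by
  rw [wdb_mul (fun _ => c) f z (differentiableAt_const c) hf]
  simp [wdb]

/-- The dual isothermic surface: if ψ solves the Gauss–Weingarten system of an
isothermic surface (real Hopf coefficient A, metric factor e^α, potential U),
then ψ* = (i e^{−α} ψ₂, i e^{−α} ψ₁) solves the Dirac equation with the
potential U* = −A e^{−α} of the dual surface. -/
theorem stmt15 (α U A : ℂ → ℝ)
    (hα : ContDiff ℝ 1 α) (hU : ContDiff ℝ 1 U) (hA : ContDiff ℝ 1 A)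
    (ψ₁ ψ₂ : ℂ → ℂ) (h1 : ContDiff ℝ 1 ψ₁) (h2 : ContDiff ℝ 1 ψ₂)
    (e1 : ∀ z, wd ψ₁ z = wd (fun w => ((α w : ℝ) : ℂ)) z * ψ₁ z
      + (A z : ℂ) * Complex.exp (-((α z : ℝ) : ℂ)) * ψ₂ z)
    (e2 : ∀ z, wd ψ₂ z = -(U z : ℂ) * ψ₁ z)
    (e3 : ∀ z, wdb ψ₁ z = (U z : ℂ) * ψ₂ z)
    (e4 : ∀ z, wdb ψ₂ z = -(A z : ℂ) * Complex.exp (-((α z : ℝ) : ℂ)) * ψ₁ z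
      + wdb (fun w => ((α w : ℝ) : ℂ)) z * ψ₂ z) :
    (∀ z, wd (fun w => Complex.I * Complex.exp (-((α w : ℝ) : ℂ)) * ψ₁ w) z
      + (-(A z : ℂ) * Complex.exp (-((α z : ℝ) : ℂ))) *
        (Complex.I * Complex.exp (-((α z : ℝ) : ℂ)) * ψ₂ z) = 0) ∧
    (∀ z, -wdb (fun w => Complex.I * Complex.exp (-((α w : ℝ) : ℂ)) * ψ₂ w) z
      + (-(A z : ℂ) * Complex.exp (-((α z : ℝ) : ℂ))) *
        (Complex.I * Complex.exp (-((α z : ℝ) : ℂ)) * ψ₁ z) = 0) := by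

  have hαc : ContDiff ℝ 1 fun w => ((α w : ℝ) : ℂ) := Complex.ofRealCLM.contDiff.comp hα
  have hneg : ContDiff ℝ 1 fun w => -((α w : ℝ) : ℂ) := hαc.neg
  have hE : ContDiff ℝ 1 fun w => Complex.exp (-((α w : ℝ) : ℂ)) :=
    ((Complex.contDiff_exp (𝕜 := ℂ)).restrict_scalars ℝ).comp hneg
  have hIE : ContDiff ℝ 1 fun w => Complex.I * Complex.exp (-((α w : ℝ) : ℂ)) :=
    contDiff_const.mul hE
  constructor
  · intro z
    rw [wd_mul _ ψ₁ z (hIE.differentiable one_ne_zero z) (h1.differentiable one_ne_zero z),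
      wd_const_mul Complex.I _ z (hE.differentiable one_ne_zero z),
      wd_exp _ z (hneg.differentiable one_ne_zero z),
      wd_neg (fun w => ((α w : ℝ) : ℂ)) z, e1 z]
    ring
  · intro z
    rw [wdb_mul _ ψ₂ z (hIE.differentiable one_ne_zero z) (h2.differentiable one_ne_zero z),
      wdb_const_mul Complex.I _ z (hE.differentiable one_ne_zero z),
      wdb_exp _ z (hneg.differentiable one_ne_zero z),
      wdb_neg (fun w => ((α w : ℝ) : ℂ)) z, e4 z]
    ring
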